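/- Let f be a strictly increasing Allee map on [0,b] with threshold A_f and carrying capacity K_f, and let g be a strictly increasing Allee map on [0,b] with threshold A_g and carrying capacity K_g, where A_f < K_f < A_g < K_g. Then for every x₀ ∈ [0,b], μ({ω : the sequence n ↦ X n ω converges to 0}) = 1. -/

import Mathlib

open MeasureTheory ProbabilityTheory Filter Set
open scoped ENNReal

/-- `f` is a strictly increasing Allee map on `[0, b]` with threshold `A` and
carrying capacity `K`. -/
def IsIncAlleeMap (b A K : ℝ) (f : ℝ → ℝ) : Prop :=
  0 < A ∧ A < K ∧ K < b ∧
  MapsTo f (Icc 0 b) (Icc 0 b) ∧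
  ContinuousOn f (Icc 0 b) ∧
  StrictMonoOn f (Icc 0 b) ∧
  f 0 = 0 ∧ f A = A ∧ f K = K ∧
  (∀ x ∈ Ioo 0 A ∪ Ioc K b, f x < x) ∧
  (∀ x ∈ Ioo A K, x < f x)

/-- The random orbit driven by a sequence of coin flips: apply `f` when the coin shows
`true` and `g` when it shows `false`. -/
def randOrbit (f g : ℝ → ℝ) (x₀ : ℝ) : ℕ → (ℕ → Bool) → ℝ
  | 0, _ => x₀
  | n + 1, ω => if ω n then f (randOrbit f g x₀ n ω) else g (randOrbit f g x₀ n ω)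


lemma measurable_pattern_set (L : ℕ) (s : ℕ → Bool) :
    MeasurableSet {ω : ℕ → Bool | ∃ m, ∀ i < L, ω (m * L + i) = s i} := by
  have : {ω : ℕ → Bool | ∃ m, ∀ i < L, ω (m * L + i) = s i}
      = ⋃ m, ⋂ i, ⋂ (_ : i < L), {ω : ℕ → Bool | ω (m * L + i) = s i} := by
    ext ω; simp [Set.mem_iUnion, Set.mem_iInter]
  rw [this]
  refine MeasurableSet.iUnion fun m => MeasurableSet.iInter fun i => MeasurableSet.iInter fun _ => ?_
  exact show MeasurableSet ((fun ω : ℕ → Bool => ω (m * L + i)) ⁻¹' {s i}) from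
    (measurable_pi_apply (m * L + i)) (measurableSet_singleton (s i))

lemma pattern_ae (μ : Measure (ℕ → Bool)) [IsProbabilityMeasure μ]
    (hindep : iIndepFun (fun n (ω : ℕ → Bool) => ω n) μ)
    {p : ℝ} (hp : p ∈ Ioo (0:ℝ) 1)
    (hcoin : ∀ n, μ {ω | ω n = true} = ENNReal.ofReal p)
    (L : ℕ) (s : ℕ → Bool) :
    μ {ω : ℕ → Bool | ∃ m, ∀ i < L, ω (m * L + i) = s i} = 1 := by
  classical
  set q : Bool → ℝ≥0∞ := fun v => if v then ENNReal.ofReal p else 1 - ENNReal.ofReal p with hqdef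
  have hmeas_coord : ∀ (n : ℕ) (v : Bool), MeasurableSet {ω : ℕ → Bool | ω n = v} := fun n v =>
    show MeasurableSet ((fun ω : ℕ → Bool => ω n) ⁻¹' {v}) from
      (measurable_pi_apply n) (measurableSet_singleton v)
  have hq : ∀ (n : ℕ) (v : Bool), μ {ω : ℕ → Bool | ω n = v} = q v := by
    intro n v
    cases v with
    | true => simpa [hqdef] using hcoin n
    | false =>
        have hcompl : {ω : ℕ → Bool | ω n = false} = {ω : ℕ → Bool | ω n = true}ᶜ := by
          ext ω; simp
        rw [hcompl, measure_compl (hmeas_coord n true) (measure_ne_top μ _), hcoin n,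
          measure_univ]
        simp [hqdef]
  have hq0 : ∀ v, q v ≠ 0 := by
    intro v; cases v
    · have h1 : ENNReal.ofReal p < 1 := ENNReal.ofReal_lt_one.mpr hp.2
      simp only [hqdef, Bool.false_eq_true, if_false]
      exact (tsub_pos_iff_lt.mpr h1).ne'
    · simpa [hqdef] using (ENNReal.ofReal_pos.mpr hp.1).ne'
  -- the block events
  set C : ℕ → Set (ℕ → Bool) := fun m =>
    ⋂ n ∈ (Finset.range L).image (fun i => m * L + i),
      (fun ω : ℕ → Bool => ω n) ⁻¹' {s (n - m * L)} with hCdef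
  have hCiff : ∀ m ω, ω ∈ C m ↔ ∀ i < L, ω (m * L + i) = s i := by
    intro m ω
    simp only [hCdef, Set.mem_iInter, Finset.mem_image, Finset.mem_range, Set.mem_preimage,
      Set.mem_singleton_iff]
    constructor
    · intro h i hi
      have := h (m * L + i) ⟨i, hi, rfl⟩
      simpa [Nat.add_sub_cancel_left] using this
    · intro h n hn
      obtain ⟨i, hi, rfl⟩ := hn
      simpa [Nat.add_sub_cancel_left] using h i hi
  have hCmeas : ∀ m, MeasurableSet (C m) := fun m =>
    Finset.measurableSet_biInter _
      (fun n _ => (measurable_pi_apply n) (measurableSet_singleton _))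
  set ρ : ℝ≥0∞ := ∏ i ∈ Finset.range L, q (s i) with hρdef
  have hρ0 : ρ ≠ 0 := Finset.prod_ne_zero_iff.mpr fun i _ => hq0 (s i)
  have hCμ : ∀ m, μ (C m) = ρ := by
    intro m
    have hinj : ∀ i ∈ Finset.range L, ∀ j ∈ Finset.range L,
        m * L + i = m * L + j → i = j := by intro i _ j _ h; omega
    have key := hindep.measure_inter_preimage_eq_mul
      ((Finset.range L).image (fun i => m * L + i))
      (sets := fun n => ({s (n - m * L)} : Set Bool))
      (fun i _ => measurableSet_singleton _)
    rw [show C m = ⋂ n ∈ (Finset.range L).image (fun i => m * L + i),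
        (fun ω : ℕ → Bool => ω n) ⁻¹' ({s (n - m * L)} : Set Bool) from by rw [hCdef]]
    rw [key, Finset.prod_image hinj]
    refine Finset.prod_congr rfl fun i _ => ?_
    have heq : ((fun ω : ℕ → Bool => ω (m * L + i)) ⁻¹' ({s (m * L + i - m * L)} : Set Bool))
        = {ω : ℕ → Bool | ω (m * L + i) = s i} := by
      ext ω; simp [Nat.add_sub_cancel_left]
    rw [heq, hq]
  -- independence of the next block from the past
  set mcoord : ℕ → MeasurableSpace (ℕ → Bool) :=
    fun n => MeasurableSpace.comap (fun ω : ℕ → Bool => ω n) inferInstance with hmcoord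
  have hle : ∀ n, mcoord n ≤ MeasurableSpace.pi :=
    fun n => (measurable_pi_apply n).comap_le
  have hcoord_meas : ∀ (n : ℕ) (v : Bool) (S : Set ℕ), n ∈ S →
      MeasurableSet[⨆ i ∈ S, mcoord i] {ω : ℕ → Bool | ω n = v} := by
    intro n v S hn
    have h1 : MeasurableSet[mcoord n] {ω : ℕ → Bool | ω n = v} :=
      ⟨{v}, measurableSet_singleton v, rfl⟩
    exact (le_iSup₂ (f := fun (i : ℕ) (_ : i ∈ S) => mcoord i) n hn) _ h1
  have hCmem : ∀ (m : ℕ) (S : Set ℕ), (∀ i, i < L → m * L + i ∈ S) →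
      MeasurableSet[⨆ i ∈ S, mcoord i] (C m) := by
    intro m S hS
    rw [hCdef]
    refine Finset.measurableSet_biInter _ (fun n hn => ?_)
    obtain ⟨i, hi, rfl⟩ := Finset.mem_image.mp hn
    have h1 : MeasurableSet[mcoord (m * L + i)]
        ((fun ω : ℕ → Bool => ω (m * L + i)) ⁻¹' {s (m * L + i - m * L)}) :=
      ⟨{s (m * L + i - m * L)}, measurableSet_singleton _, rfl⟩
    exact (le_iSup₂ (f := fun (j : ℕ) (_ : j ∈ S) => mcoord j) (m * L + i)
      (hS i (Finset.mem_range.mp hi))) _ h1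
  have key : ∀ M₀ : ℕ, μ (⋂ m ∈ Finset.range M₀, (C m)ᶜ) = (1 - ρ) ^ M₀ := by
    intro M₀
    induction M₀ with
    | zero => simp
    | succ M₀ ih =>
        have hST : Disjoint {n : ℕ | n < M₀ * L} {n : ℕ | M₀ * L ≤ n ∧ n < M₀ * L + L} :=
          Set.disjoint_left.mpr (by intro n hn hn'; simp only [Set.mem_setOf_eq] at hn hn'; omega)
        have hind : Indep (⨆ n ∈ {n : ℕ | n < M₀ * L}, mcoord n)
            (⨆ n ∈ {n : ℕ | M₀ * L ≤ n ∧ n < M₀ * L + L}, mcoord n) μ :=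
          indep_iSup_of_disjoint hle hindep hST
        have h1 : MeasurableSet[⨆ n ∈ {n : ℕ | n < M₀ * L}, mcoord n]
            (⋂ m ∈ Finset.range M₀, (C m)ᶜ) := by
          refine Finset.measurableSet_biInter (Finset.range M₀) (fun m hm => ?_)
          refine MeasurableSet.compl ?_
          refine hCmem m _ (fun i hi => ?_)
          have hm' := Finset.mem_range.mp hm
          simp only [Set.mem_setOf_eq]
          calc m * L + i < m * L + L := by omega
            _ ≤ M₀ * L := by
                have : m + 1 ≤ M₀ := hm'
                calc m * L + L = (m+1) * L := by ring
                  _ ≤ M₀ * L := Nat.mul_le_mul_right L this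
        have h2 : MeasurableSet[⨆ n ∈ {n : ℕ | M₀ * L ≤ n ∧ n < M₀ * L + L}, mcoord n]
            ((C M₀)ᶜ) := by
          refine MeasurableSet.compl ?_
          exact hCmem M₀ _ (fun i hi => by simp only [Set.mem_setOf_eq]; omega)
        have hmul := ((Indep_iff _ _ _).mp hind) _ _ h1 h2
        have hrange : (⋂ m ∈ Finset.range (M₀ + 1), (C m)ᶜ)
            = (⋂ m ∈ Finset.range M₀, (C m)ᶜ) ∩ (C M₀)ᶜ := by
          rw [Finset.range_add_one, Finset.set_biInter_insert, Set.inter_comm]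
        rw [hrange, hmul, ih, prob_compl_eq_one_sub (hCmeas M₀), hCμ M₀, pow_succ]
  -- conclusion
  have hset : {ω : ℕ → Bool | ∃ m, ∀ i < L, ω (m * L + i) = s i} = ⋃ m, C m := by
    ext ω
    simp only [Set.mem_setOf_eq, Set.mem_iUnion]
    exact exists_congr fun m => (hCiff m ω).symm
  rw [hset]
  rw [← prob_compl_eq_zero_iff (MeasurableSet.iUnion hCmeas)]
  have hsub : ∀ M₀ : ℕ, μ ((⋃ m, C m)ᶜ) ≤ (1 - ρ) ^ M₀ := by
    intro M₀
    rw [← key M₀]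
    refine measure_mono ?_
    rw [Set.compl_iUnion]
    intro ω hω
    rw [Set.mem_iInter₂] at *
    intro m _
    exact Set.mem_iInter.mp hω m
  have htend : Tendsto (fun M₀ : ℕ => (1 - ρ) ^ M₀) atTop (nhds 0) :=
    ENNReal.tendsto_pow_atTop_nhds_zero_of_lt_one
      (ENNReal.sub_lt_self ENNReal.one_ne_top one_ne_zero hρ0)
  exact le_antisymm (ge_of_tendsto' htend hsub) (zero_le)
lemma iterMonoOn {h : ℝ → ℝ} {I : Set ℝ} (hmaps : MapsTo h I I) (hmono : MonotoneOn h I) :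
    ∀ N, MonotoneOn h^[N] I := by
  intro N
  induction N with
  | zero => simpa using monotoneOn_id
  | succ N ih =>
      intro x hx y hy hxy
      rw [Function.iterate_succ_apply', Function.iterate_succ_apply']
      exact hmono (hmaps.iterate N hx) (hmaps.iterate N hy) (ih hx hy hxy)

lemma decay {h : ℝ → ℝ} {lo hi : ℝ} (hmaps : MapsTo h (Icc lo hi) (Icc lo hi))
    (hcont : ContinuousOn h (Icc lo hi)) (hmono : MonotoneOn h (Icc lo hi)) {c d : ℝ}
    (hc : c ∈ Icc lo hi) (hd : d ∈ Icc lo hi) (hcd : c ≤ d)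
    (hfix : h c = c)
    (hlt : ∀ x, c < x → x ≤ d → h x < x) :
    Tendsto (fun n => h^[n] d) atTop (nhds c) := by
  have hsub : Icc c d ⊆ Icc lo hi := Icc_subset_Icc hc.1 hd.2
  have hinv : ∀ x ∈ Icc c d, h x ∈ Icc c d := by
    intro x hx
    constructor
    · rw [← hfix]; exact hmono hc (hsub hx) hx.1
    · rcases eq_or_lt_of_le hx.1 with h1 | h1
      · rw [← h1, hfix]; exact hcd
      · exact le_of_lt (lt_of_lt_of_le (hlt x h1 hx.2) hx.2)
  set a : ℕ → ℝ := fun n => h^[n] d with ha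
  have hmem : ∀ n, a n ∈ Icc c d := by
    intro n; induction n with
    | zero => exact ⟨hcd, le_refl d⟩
    | succ n ih =>
        have : a (n + 1) = h (a n) := Function.iterate_succ_apply' h n d
        rw [this]; exact hinv _ ih
  have hstep : ∀ n, a (n + 1) ≤ a n := by
    intro n
    have heq : a (n + 1) = h (a n) := Function.iterate_succ_apply' h n d
    rw [heq]
    rcases eq_or_lt_of_le (hmem n).1 with h1 | h1
    · rw [← h1, hfix]
    · exact le_of_lt (hlt _ h1 (hmem n).2)
  have hanti : Antitone a := antitone_nat_of_succ_le hstep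
  have hbdd : BddBelow (range a) := ⟨c, by rintro _ ⟨n, rfl⟩; exact (hmem n).1⟩
  have htends : Tendsto a atTop (nhds (⨅ n, a n)) := tendsto_atTop_ciInf hanti hbdd
  set L := ⨅ n, a n with hL
  have hLmem : L ∈ Icc c d :=
    ⟨le_ciInf fun n => (hmem n).1, le_trans (ciInf_le hbdd 0) (hmem 0).2⟩
  have hcontL : ContinuousWithinAt h (Icc lo hi) L := hcont L (hsub hLmem)
  have h1 : Tendsto (fun n => h (a n)) atTop (nhds (h L)) := by
    apply hcontL.tendsto.comp
    rw [tendsto_nhdsWithin_iff]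
    exact ⟨htends, Eventually.of_forall fun n => hsub (hmem n)⟩
  have h2 : Tendsto (fun n => h (a n)) atTop (nhds L) := by
    have heq : (fun n => h (a n)) = fun n => a (n + 1) := by
      funext n; exact (Function.iterate_succ_apply' h n d).symm
    rw [heq]
    exact htends.comp (tendsto_add_atTop_nat 1)
  have hfixL : h L = L := tendsto_nhds_unique h1 h2
  have hLc : L = c := by
    by_contra hne
    have hlt' : c < L := lt_of_le_of_ne hLmem.1 (Ne.symm hne)
    exact absurd hfixL (ne_of_lt (hlt L hlt' hLmem.2))
  rwa [hLc] at htends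

lemma randOrbit_succ (f g : ℝ → ℝ) (x₀ : ℝ) (n : ℕ) (ω : ℕ → Bool) :
    randOrbit f g x₀ (n + 1) ω
      = if ω n then f (randOrbit f g x₀ n ω) else g (randOrbit f g x₀ n ω) := rfl

lemma randOrbit_mem {b : ℝ} {f g : ℝ → ℝ}
    (hfm : MapsTo f (Icc 0 b) (Icc 0 b)) (hgm : MapsTo g (Icc 0 b) (Icc 0 b))
    {x₀ : ℝ} (hx₀ : x₀ ∈ Icc (0:ℝ) b) :
    ∀ (n : ℕ) (ω : ℕ → Bool), randOrbit f g x₀ n ω ∈ Icc (0:ℝ) b := by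
  intro n ω
  induction n with
  | zero => exact hx₀
  | succ n ih =>
      rw [randOrbit_succ]
      cases hωn : ω n
      · simp only [hωn, Bool.false_eq_true, if_false]; exact hgm ih
      · simp only [hωn, if_true]; exact hfm ih

lemma randOrbit_run_true (f g : ℝ → ℝ) (x₀ : ℝ) :
    ∀ (j m : ℕ) (ω : ℕ → Bool), (∀ i < j, ω (m + i) = true) →
      randOrbit f g x₀ (m + j) ω = f^[j] (randOrbit f g x₀ m ω) := by
  intro j
  induction j with
  | zero => intro m ω _; simp
  | succ j ih =>
      intro m ω hω
      have h1 : m + (j + 1) = (m + j) + 1 := by omega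
      rw [h1, randOrbit_succ, show ω (m + j) = true from hω j (Nat.lt_succ_self j), if_pos rfl,
        ih m ω (fun i hi => hω i (by omega)), Function.iterate_succ_apply']

lemma randOrbit_run_false (f g : ℝ → ℝ) (x₀ : ℝ) :
    ∀ (j m : ℕ) (ω : ℕ → Bool), (∀ i < j, ω (m + i) = false) →
      randOrbit f g x₀ (m + j) ω = g^[j] (randOrbit f g x₀ m ω) := by
  intro j
  induction j with
  | zero => intro m ω _; simp
  | succ j ih =>
      intro m ω hω
      have h1 : m + (j + 1) = (m + j) + 1 := by omega
      rw [h1, randOrbit_succ, show ω (m + j) = false from hω j (Nat.lt_succ_self j)]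
      rw [if_neg (by simp), ih m ω (fun i hi => hω i (by omega)), Function.iterate_succ_apply']

theorem stmt12
    (b Af Kf Ag Kg : ℝ) (hb : 0 < b)
    (f g : ℝ → ℝ)
    (hf : IsIncAlleeMap b Af Kf f) (hg : IsIncAlleeMap b Ag Kg g)
    (horder : Af < Kf ∧ Kf < Ag ∧ Ag < Kg)
    (p : ℝ) (hp : p ∈ Ioo (0 : ℝ) 1)
    (μ : Measure (ℕ → Bool)) [IsProbabilityMeasure μ]
    (hindep : iIndepFun (fun n ω => ω n) μ)
    (hcoin : ∀ n, μ {ω | ω n = true} = ENNReal.ofReal p) :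
    ∀ x₀ ∈ Icc (0 : ℝ) b,
      μ {ω | Tendsto (fun n => randOrbit f g x₀ n ω) atTop (nhds 0)} = 1 := by
  obtain ⟨hAf, hAfKf, hKfb, hfm, hfc, hfs, hf0, hfA, hfK, hflt, hfgt⟩ := hf
  obtain ⟨hAg, hAgKg, hKgb, hgm, hgc, hgs, hg0, hgA, hgK, hglt, hggt⟩ := hg
  obtain ⟨ho1, ho2, ho3⟩ := horder
  intro x₀ hx₀
  have hAfb : Af < b := lt_trans ho1 (lt_trans ho2 (lt_trans ho3 hKgb))
  have hAfAg : Af < Ag := lt_trans ho1 ho2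
  have hI0 : (0:ℝ) ∈ Icc (0:ℝ) b := ⟨le_refl 0, hb.le⟩
  have hIb : b ∈ Icc (0:ℝ) b := ⟨hb.le, le_refl b⟩
  have hKfI : Kf ∈ Icc (0:ℝ) b := ⟨le_of_lt (lt_trans hAf ho1), hKfb.le⟩
  -- Step 1: iterates of f from b eventually drop below Ag
  have hdecayf : Tendsto (fun n => f^[n] b) atTop (nhds Kf) :=
    decay hfm hfc hfs.monotoneOn hKfI hIb hKfb.le hfK
      (fun x hx1 hx2 => hflt x (Or.inr ⟨hx1, hx2⟩))
  obtain ⟨N, hN⟩ := (hdecayf.eventually_lt_const ho2).exists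
  set y₀ : ℝ := f^[N] b with hy₀def
  have hy₀I : y₀ ∈ Icc (0:ℝ) b := hfm.iterate N hIb
  -- Step 2: for any δ > 0, some composite word pushes everything below δ
  have hsmall : ∀ δ : ℝ, 0 < δ → ∃ M, ∀ x ∈ Icc (0:ℝ) b, g^[M] (f^[N] x) < δ := by
    intro δ hδ
    have hdecayg : Tendsto (fun n => g^[n] y₀) atTop (nhds 0) :=
      decay hgm hgc hgs.monotoneOn hI0 hy₀I hy₀I.1 hg0
        (fun x hx1 hx2 => hglt x (Or.inl ⟨hx1, lt_of_le_of_lt hx2 hN⟩))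
    obtain ⟨M, hM⟩ := (hdecayg.eventually_lt_const hδ).exists
    refine ⟨M, fun x hx => ?_⟩
    have h1 : f^[N] x ≤ y₀ := iterMonoOn hfm hfs.monotoneOn N hx hIb hx.2
    have h2 : g^[M] (f^[N] x) ≤ g^[M] y₀ :=
      iterMonoOn hgm hgs.monotoneOn M (hfm.iterate N hx) hy₀I h1
    exact lt_of_le_of_lt h2 hM
  -- absorption below Af
  have habsorb : ∀ δ : ℝ, δ ≤ Af → ∀ (ω : ℕ → Bool) (n : ℕ),
      randOrbit f g x₀ n ω ∈ Ico 0 δ →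
      ∀ j, randOrbit f g x₀ (n + j) ω ∈ Ico 0 δ := by
    intro δ hδA ω n hn j
    induction j with
    | zero => simpa using hn
    | succ j ih =>
        set y := randOrbit f g x₀ (n + j) ω with hy
        have hyIco : y ∈ Ico 0 δ := ih
        have hδpos : 0 < δ := lt_of_le_of_lt hyIco.1 hyIco.2
        have hyI : y ∈ Icc (0:ℝ) b :=
          ⟨hyIco.1, le_of_lt (lt_of_lt_of_le hyIco.2 (le_of_lt (lt_of_le_of_lt hδA hAfb)))⟩
        have hstep : randOrbit f g x₀ (n + (j + 1)) ω = if ω (n + j) then f y else g y := rfl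
        rcases eq_or_lt_of_le hyIco.1 with h0 | h0
        · rw [hstep]
          cases hωn : ω (n + j) <;>
            simp only [hωn, if_true, Bool.false_eq_true, if_false, ← h0, hf0, hg0] <;>
            exact ⟨le_refl 0, hδpos⟩
        · have hyA : y ∈ Ioo 0 Af := ⟨h0, lt_of_lt_of_le hyIco.2 hδA⟩
          have hfy : f y < y := hflt y (Or.inl hyA)
          have hgy : g y < y := hglt y (Or.inl ⟨h0, lt_trans hyA.2 hAfAg⟩)
          rw [hstep]
          cases hωn : ω (n + j)
          · simp only [Bool.false_eq_true, if_false]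
            exact ⟨(hgm hyI).1, lt_trans hgy hyIco.2⟩
          · simp only [if_true]
            exact ⟨(hfm hyI).1, lt_trans hfy hyIco.2⟩
  -- choose block lengths for each k
  have hMex : ∀ k : ℕ, ∃ M, ∀ x ∈ Icc (0:ℝ) b,
      g^[M] (f^[N] x) < min (1 / ((k:ℝ) + 1)) Af := fun k =>
    hsmall _ (lt_min (by positivity) hAf)
  choose M hM using hMex
  have horbI := randOrbit_mem hfm hgm hx₀
  -- the good events
  set good : ℕ → Set (ℕ → Bool) := fun k =>
    {ω : ℕ → Bool | ∃ m, ∀ i < N + M k, ω (m * (N + M k) + i) = decide (i < N)} with hgooddef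
  have hgoodmeas : ∀ k, MeasurableSet (good k) := fun k => measurable_pattern_set _ _
  have hgood : ∀ k, μ (good k) = 1 := fun k =>
    pattern_ae μ hindep hp hcoin (N + M k) (fun i => decide (i < N))
  have hGmeas : MeasurableSet (⋂ k, good k) := MeasurableSet.iInter hgoodmeas
  have hG : μ (⋂ k, good k) = 1 := by
    rw [← prob_compl_eq_zero_iff hGmeas, Set.compl_iInter]
    exact measure_iUnion_null fun k => (prob_compl_eq_zero_iff (hgoodmeas k)).mpr (hgood k)
  -- the good set is contained in the convergence set
  have hsubset : (⋂ k, good k) ⊆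
      {ω | Tendsto (fun n => randOrbit f g x₀ n ω) atTop (nhds 0)} := by
    intro ω hω
    rw [Set.mem_setOf_eq, Metric.tendsto_atTop]
    intro ε hε
    obtain ⟨k, hk⟩ := exists_nat_one_div_lt hε
    obtain ⟨m, hm⟩ := Set.mem_iInter.mp hω k
    set Lk := N + M k with hLk
    refine ⟨m * Lk + Lk, fun n hn => ?_⟩
    have htrue : ∀ i < N, ω (m * Lk + i) = true := by
      intro i hi
      rw [hm i (by omega)]
      exact decide_eq_true hi
    have hfalse : ∀ i < M k, ω ((m * Lk + N) + i) = false := by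
      intro i hi
      have h1 : (m * Lk + N) + i = m * Lk + (N + i) := by omega
      rw [h1, hm (N + i) (by omega)]
      exact decide_eq_false (by omega)
    have e1 : randOrbit f g x₀ (m * Lk + N) ω = f^[N] (randOrbit f g x₀ (m * Lk) ω) :=
      randOrbit_run_true f g x₀ N (m * Lk) ω htrue
    have e2 : randOrbit f g x₀ ((m * Lk + N) + M k) ω
        = g^[M k] (f^[N] (randOrbit f g x₀ (m * Lk) ω)) := by
      rw [randOrbit_run_false f g x₀ (M k) (m * Lk + N) ω hfalse, e1]
    have h3 : randOrbit f g x₀ (m * Lk + Lk) ω < min (1 / ((k:ℝ) + 1)) Af := by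
      have hidx : m * Lk + Lk = (m * Lk + N) + M k := by omega
      rw [hidx, e2]
      exact hM k _ (horbI (m * Lk) ω)
    have h4 : randOrbit f g x₀ (m * Lk + Lk) ω ∈ Ico 0 (min (1 / ((k:ℝ) + 1)) Af) :=
      ⟨(horbI _ ω).1, h3⟩
    have h5 := habsorb _ (min_le_right _ _) ω _ h4 (n - (m * Lk + Lk))
    rw [show m * Lk + Lk + (n - (m * Lk + Lk)) = n from by omega] at h5
    rw [Real.dist_eq, sub_zero, abs_of_nonneg (horbI n ω).1]
    exact lt_of_lt_of_le (lt_of_lt_of_le h5.2 (min_le_left _ _)) hk.le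
  exact le_antisymm prob_le_one (le_trans (le_of_eq hG.symm) (measure_mono hsubset))
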